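/- Monotone improvement of the Blahut–Arimoto iteration: let W be a discrete memoryless channel with finite alphabets 𝒳, 𝒴 and W(y|x) > 0 for all x, y, and let p be an input pmf with p(x) > 0 for all x. Define c(x) = exp( Σ_y W(y|x) log( W(y|x) / (pW)(y) ) ) and the updated pmf p'(x) = p(x)c(x) / Σ_{x'} p(x')c(x'). Then p' is a valid pmf and I(p', W) ≥ I(p, W). -/
import Mathlib


open scoped BigOperators

/-- Gibbs' inequality building block: `∑ a (log b - log a) ≤ 0` when `∑ b ≤ ∑ a`. -/
private lemma gibbs_aux {ι : Type*} [Fintype ι] (a b : ι → ℝ)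
    (ha : ∀ i, 0 < a i) (hb : ∀ i, 0 < b i)
    (hab : ∑ i, b i ≤ ∑ i, a i) :
    ∑ i, a i * (Real.log (b i) - Real.log (a i)) ≤ 0 := by
  calc ∑ i, a i * (Real.log (b i) - Real.log (a i))
      ≤ ∑ i, (b i - a i) := by
        apply Finset.sum_le_sum
        intro i _
        have h1 : Real.log (b i) - Real.log (a i) = Real.log (b i / a i) := by
          rw [Real.log_div (hb i).ne' (ha i).ne']
        rw [h1]
        have h2 : Real.log (b i / a i) ≤ b i / a i - 1 :=
          Real.log_le_sub_one_of_pos (div_pos (hb i) (ha i))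
        calc a i * Real.log (b i / a i) ≤ a i * (b i / a i - 1) :=
              mul_le_mul_of_nonneg_left h2 (ha i).le
          _ = b i - a i := by rw [mul_sub, mul_one, mul_div_cancel₀ _ (ha i).ne']
    _ ≤ 0 := by rw [Finset.sum_sub_distrib]; linarith

/-- Mutual information of a discrete memoryless channel `W` with input pmf `p`. -/
noncomputable def mutualInfo {X Y : Type*} [Fintype X] [Fintype Y]
    (p : X → ℝ) (W : X → Y → ℝ) : ℝ :=
  ∑ x, ∑ y, p x * W x y * Real.log (W x y / ∑ x', p x' * W x' y)

/-- Monotone improvement of the Blahut–Arimoto iteration: for a discrete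
memoryless channel `W` with `W(y|x) > 0` everywhere and a strictly positive
input pmf `p`, setting `c(x) = exp(Σ_y W(y|x) log(W(y|x)/(pW)(y)))` and
`p'(x) = p(x)c(x) / Σ_{x'} p(x')c(x')`, the update `p'` is a valid pmf and
`I(p', W) ≥ I(p, W)`. -/
theorem blahutArimoto_step_improves
    {X Y : Type*} [Fintype X] [Fintype Y] [Nonempty X]
    (W : X → Y → ℝ)
    (hWpos : ∀ x y, 0 < W x y) (hW1 : ∀ x, ∑ y, W x y = 1)
    (p : X → ℝ)
    (hp0 : ∀ x, 0 < p x) (hp1 : ∑ x, p x = 1)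
    (c p' : X → ℝ)
    (hc : c = fun x => Real.exp (∑ y, W x y * Real.log (W x y / ∑ x', p x' * W x' y)))
    (hp' : p' = fun x => p x * c x / ∑ x', p x' * c x') :
    (∀ x, 0 ≤ p' x) ∧ (∑ x, p' x = 1) ∧ mutualInfo p W ≤ mutualInfo p' W := by
  set q : Y → ℝ := fun y => ∑ x', p x' * W x' y with hqdef
  have hqapp : ∀ y, (∑ x', p x' * W x' y) = q y := fun y => by rw [hqdef]
  have hqpos : ∀ y, 0 < q y := fun y =>
    Finset.sum_pos (fun x _ => mul_pos (hp0 x) (hWpos x y)) Finset.univ_nonempty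
  have hcpos : ∀ x, 0 < c x := by intro x; rw [hc]; exact Real.exp_pos _
  set Z : ℝ := ∑ x', p x' * c x' with hZdef
  have hZpos : 0 < Z :=
    Finset.sum_pos (fun x _ => mul_pos (hp0 x) (hcpos x)) Finset.univ_nonempty
  have hp'pos : ∀ x, 0 < p' x := by
    intro x; rw [hp']; exact div_pos (mul_pos (hp0 x) (hcpos x)) hZpos
  have hp'sum : ∑ x, p' x = 1 := by
    rw [hp']; simp only [← Finset.sum_div]; rw [← hZdef, div_self hZpos.ne']
  set q' : Y → ℝ := fun y => ∑ x', p' x' * W x' y with hq'def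
  have hq'app : ∀ y, (∑ x', p' x' * W x' y) = q' y := fun y => by rw [hq'def]
  have hq'pos : ∀ y, 0 < q' y := fun y =>
    Finset.sum_pos (fun x _ => mul_pos (hp'pos x) (hWpos x y)) Finset.univ_nonempty
  have hq'sum : ∑ y, q' y = 1 := by
    rw [hq'def]; rw [Finset.sum_comm]
    simp only [← Finset.mul_sum, hW1, mul_one]; exact hp'sum
  have hlogc : ∀ x, Real.log (c x) = ∑ y, W x y * Real.log (W x y / q y) := by
    intro x; rw [hc]; simp only [hqapp]; exact Real.log_exp _
  have hlogp' : ∀ x, Real.log (p' x) = Real.log (p x) + Real.log (c x) - Real.log Z := by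
    intro x; rw [hp']
    simp only
    rw [Real.log_div (mul_pos (hp0 x) (hcpos x)).ne' hZpos.ne',
        Real.log_mul (hp0 x).ne' (hcpos x).ne']
  -- I(p) = Σ p log c
  have hIp : mutualInfo p W = ∑ x, p x * Real.log (c x) := by
    unfold mutualInfo
    simp only [hqapp]
    refine Finset.sum_congr rfl fun x _ => ?_
    rw [hlogc, Finset.mul_sum]
    exact Finset.sum_congr rfl fun y _ => (mul_assoc _ _ _)
  -- Step A: I(p) ≤ log Z
  have stepA : mutualInfo p W ≤ Real.log Z := by
    have hgib := gibbs_aux p (fun x => p x * c x / Z) hp0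
      (fun x => div_pos (mul_pos (hp0 x) (hcpos x)) hZpos)
      (by rw [hp1]; simp only [← Finset.sum_div]; rw [← hZdef, div_self hZpos.ne'])
    have heq : ∀ x, Real.log (p x * c x / Z) - Real.log (p x)
        = Real.log (c x) - Real.log Z := by
      intro x
      rw [Real.log_div (mul_pos (hp0 x) (hcpos x)).ne' hZpos.ne',
          Real.log_mul (hp0 x).ne' (hcpos x).ne']
      ring
    simp only [heq] at hgib
    have hsplit : ∑ x, p x * (Real.log (c x) - Real.log Z)
        = (∑ x, p x * Real.log (c x)) - (∑ x, p x) * Real.log Z := by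
      simp only [mul_sub, Finset.sum_sub_distrib, ← Finset.sum_mul]
    rw [hsplit, hp1, one_mul] at hgib
    rw [hIp]; linarith
  -- I(p') = Σ p' log c + Σ q' (log q − log q')
  have hIp' : mutualInfo p' W = (∑ x, p' x * Real.log (c x))
      + ∑ y, q' y * (Real.log (q y) - Real.log (q' y)) := by
    unfold mutualInfo
    simp only [hq'app]
    have h1 : ∀ x y, p' x * W x y * Real.log (W x y / q' y)
        = p' x * (W x y * Real.log (W x y / q y))
          + p' x * W x y * (Real.log (q y) - Real.log (q' y)) := by
      intro x y
      rw [Real.log_div (hWpos x y).ne' (hq'pos y).ne',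
          Real.log_div (hWpos x y).ne' (hqpos y).ne']
      ring
    simp only [h1, Finset.sum_add_distrib]
    congr 1
    · refine Finset.sum_congr rfl fun x _ => ?_
      rw [← Finset.mul_sum, ← hlogc]
    · rw [Finset.sum_comm]
      refine Finset.sum_congr rfl fun y _ => ?_
      rw [← Finset.sum_mul, hq'app y, mul_comm]
  -- Σ p' log c = log Z + Σ p' (log p' − log p)
  have hsum1 : ∑ x, p' x * Real.log (c x)
      = Real.log Z + ∑ x, p' x * (Real.log (p' x) - Real.log (p x)) := by
    have hx : ∀ x, Real.log (c x)
        = (Real.log (p' x) - Real.log (p x)) + Real.log Z := by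
      intro x; rw [hlogp' x]; ring
    simp only [hx, mul_add, Finset.sum_add_distrib, ← Finset.sum_mul, hp'sum, one_mul]
    ring
  -- Step B: data processing via Gibbs on the joint distribution
  have stepB : Real.log Z ≤ mutualInfo p' W := by
    have hb : ∀ i : X × Y, 0 < p i.1 * W i.1 i.2 * (q' i.2 / q i.2) := fun i =>
      mul_pos (mul_pos (hp0 i.1) (hWpos i.1 i.2)) (div_pos (hq'pos i.2) (hqpos i.2))
    have ha : ∀ i : X × Y, 0 < p' i.1 * W i.1 i.2 := fun i =>
      mul_pos (hp'pos i.1) (hWpos i.1 i.2)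
    have hsb : ∑ i : X × Y, p i.1 * W i.1 i.2 * (q' i.2 / q i.2)
        ≤ ∑ i : X × Y, p' i.1 * W i.1 i.2 := by
      rw [Fintype.sum_prod_type, Fintype.sum_prod_type]
      have l1 : ∑ x, ∑ y, p x * W x y * (q' y / q y) = ∑ y, q' y := by
        rw [Finset.sum_comm]
        refine Finset.sum_congr rfl fun y _ => ?_
        rw [← Finset.sum_mul, hqapp y]
        rw [mul_div_assoc', mul_div_cancel_left₀ _ (hqpos y).ne']
      have l2 : ∑ x, ∑ y, p' x * W x y = (1 : ℝ) := by
        simp only [← Finset.mul_sum, hW1, mul_one]; exact hp'sum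
      rw [l1, l2, hq'sum]
    have hgib := gibbs_aux (fun i : X × Y => p' i.1 * W i.1 i.2)
      (fun i : X × Y => p i.1 * W i.1 i.2 * (q' i.2 / q i.2)) ha hb hsb
    have hterm : ∀ i : X × Y, p' i.1 * W i.1 i.2 *
        (Real.log (p i.1 * W i.1 i.2 * (q' i.2 / q i.2))
          - Real.log (p' i.1 * W i.1 i.2))
        = p' i.1 * W i.1 i.2 * (Real.log (p i.1) - Real.log (p' i.1))
          + p' i.1 * W i.1 i.2 * (Real.log (q' i.2) - Real.log (q i.2)) := by
      rintro ⟨x, y⟩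
      simp only
      rw [Real.log_mul (mul_pos (hp0 x) (hWpos x y)).ne'
            (div_pos (hq'pos y) (hqpos y)).ne',
          Real.log_mul (hp0 x).ne' (hWpos x y).ne',
          Real.log_div (hq'pos y).ne' (hqpos y).ne',
          Real.log_mul (hp'pos x).ne' (hWpos x y).ne']
      ring
    simp only [hterm, Finset.sum_add_distrib, Fintype.sum_prod_type] at hgib
    have l3 : ∑ x, ∑ y, p' x * W x y * (Real.log (p x) - Real.log (p' x))
        = ∑ x, p' x * (Real.log (p x) - Real.log (p' x)) := by
      refine Finset.sum_congr rfl fun x _ => ?_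
      rw [← Finset.sum_mul, ← Finset.mul_sum, hW1, mul_one]
    have l4 : ∑ x, ∑ y, p' x * W x y * (Real.log (q' y) - Real.log (q y))
        = ∑ y, q' y * (Real.log (q' y) - Real.log (q y)) := by
      rw [Finset.sum_comm]
      refine Finset.sum_congr rfl fun y _ => ?_
      rw [← Finset.sum_mul, hq'app y]
    rw [l3, l4] at hgib
    have e1 : ∑ x, p' x * (Real.log (p x) - Real.log (p' x))
        = - ∑ x, p' x * (Real.log (p' x) - Real.log (p x)) := by
      rw [← Finset.sum_neg_distrib]
      exact Finset.sum_congr rfl fun x _ => by ring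
    have e2 : ∑ y, q' y * (Real.log (q' y) - Real.log (q y))
        = - ∑ y, q' y * (Real.log (q y) - Real.log (q' y)) := by
      rw [← Finset.sum_neg_distrib]
      exact Finset.sum_congr rfl fun y _ => by ring
    rw [e1, e2] at hgib
    rw [hIp', hsum1]
    linarith
  exact ⟨fun x => (hp'pos x).le, hp'sum, le_trans stepA stepB⟩
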